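/- For all γ, ω ∈ ℝ, the spectrum of the kagome operator satisfies: (1) σ_{γ,ω} ⊂ [−4,4]; (2) σ_{γ+16π,ω} = σ_{γ,ω} (translation invariance); (3) e ∈ σ_{γ+8π,ω} if and only if −e ∈ σ_{γ,ω} (translation anti-invariance). -/

import Mathlib

/- STATEMENT 11: `σ_{γ,ω} ⊂ [−4,4]`, `σ_{γ+16π,ω} = σ_{γ,ω}` (translation invariance), and
`e ∈ σ_{γ+8π,ω} ↔ −e ∈ σ_{γ,ω}` (translation anti-invariance). -/

open Complex Matrix

noncomputable section

/-- `ℓ²(ℤ²;ℂ³)`. -/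
abbrev KH : Type := lp (fun _ : ℤ × ℤ => EuclideanSpace ℂ (Fin 3)) 2

/-- `Q` is the kagome operator `Q_{γ,ω}`, written entrywise: the three components of
`ℂ³` correspond to the labels `1,3,5` of the kagome lattice, the magnetic translations are
`(τ₁v)_α = v_{α₁−1,α₂}`, `(τ₂v)_α = e^{iγα₁}v_{α₁,α₂−1}`, and `Q_{γ,ω}` has zero diagonal
blocks and off-diagonal blocks `Q₁₂ = e^{i(ω+γ/8)}(τ₁* + e^{−iγ/2}τ₁*τ₂)`,
`Q₁₃ = e^{−i(ω+γ/8)}(τ₁* + τ₂*)`, `Q₂₁ = e^{−i(ω+γ/8)}(τ₁ + e^{−iγ/2}τ₁τ₂*)`,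
`Q₂₃ = e^{i(ω+γ/8)}(e^{−iγ/2}τ₁τ₂* + τ₂*)`, `Q₃₁ = e^{i(ω+γ/8)}(τ₁ + τ₂)`,
`Q₃₂ = e^{−i(ω+γ/8)}(e^{−iγ/2}τ₁*τ₂ + τ₂)`. -/
def IsKagome (γ ω : ℝ) (Q : KH →L[ℂ] KH) : Prop :=
  ∀ v : KH, ∀ a b : ℤ,
    (Q v) (a, b) 0 =
        Complex.exp (Complex.I * ((ω : ℂ) + (γ : ℂ)/8)) *
          (v (a+1, b) 1 +
            Complex.exp (Complex.I * (-((γ : ℂ)/2) + (γ : ℂ) * ((a : ℂ)+1))) * v (a+1, b-1) 1)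
      + Complex.exp (-(Complex.I * ((ω : ℂ) + (γ : ℂ)/8))) *
          (v (a+1, b) 2 + Complex.exp (-(Complex.I * (γ : ℂ) * (a : ℂ))) * v (a, b+1) 2)
    ∧
    (Q v) (a, b) 1 =
        Complex.exp (-(Complex.I * ((ω : ℂ) + (γ : ℂ)/8))) *
          (v (a-1, b) 0 +
            Complex.exp (Complex.I * (-((γ : ℂ)/2) - (γ : ℂ) * ((a : ℂ)-1))) * v (a-1, b+1) 0)
      + Complex.exp (Complex.I * ((ω : ℂ) + (γ : ℂ)/8)) *
          (Complex.exp (Complex.I * (-((γ : ℂ)/2) - (γ : ℂ) * ((a : ℂ)-1))) * v (a-1, b+1) 2 +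
            Complex.exp (-(Complex.I * (γ : ℂ) * (a : ℂ))) * v (a, b+1) 2)
    ∧
    (Q v) (a, b) 2 =
        Complex.exp (Complex.I * ((ω : ℂ) + (γ : ℂ)/8)) *
          (v (a-1, b) 0 + Complex.exp (Complex.I * (γ : ℂ) * (a : ℂ)) * v (a, b-1) 0)
      + Complex.exp (-(Complex.I * ((ω : ℂ) + (γ : ℂ)/8))) *
          (Complex.exp (Complex.I * (-((γ : ℂ)/2) + (γ : ℂ) * ((a : ℂ)+1))) * v (a+1, b-1) 1 +
            Complex.exp (Complex.I * (γ : ℂ) * (a : ℂ)) * v (a, b-1) 1)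

/-! ### Auxiliary machinery -/

namespace KagomeAux

/-- unimodular phase -/
def phase (t : ℝ) : ℂ := Complex.exp (Complex.I * t)

lemma norm_phase (t : ℝ) : ‖phase t‖ = 1 := by
  simp [phase, Complex.norm_exp]

lemma phase_neg_mul (t : ℝ) : phase (-t) * phase t = 1 := by
  rw [phase, phase, ← Complex.exp_add, show Complex.I * ((-t : ℝ) : ℂ) + Complex.I * (t : ℝ) = 0
    by push_cast; ring, Complex.exp_zero]

lemma rpow_two_eq (t : ℝ) : t ^ (2:ℝ) = t ^ (2:ℕ) := by
  rw [← Real.rpow_natCast t 2]; norm_num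

lemma euc_norm_sq (x : EuclideanSpace ℂ (Fin 3)) : ‖x‖ ^ (2:ℝ) = ∑ i, ‖x i‖ ^ (2:ℝ) := by
  rw [rpow_two_eq, EuclideanSpace.norm_eq,
    Real.sq_sqrt (Finset.sum_nonneg fun i _ => sq_nonneg _)]
  exact Finset.sum_congr rfl fun i _ => (rpow_two_eq _).symm

lemma lp_hasSum (f : KH) : HasSum (fun α => ‖f α‖ ^ (2:ℝ)) (‖f‖ ^ (2:ℝ)) := by
  have h := lp.hasSum_norm (E := fun _ : ℤ × ℤ => EuclideanSpace ℂ (Fin 3)) (p := 2)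
    (by norm_num) f
  simp_rw [show ((2:ENNReal)).toReal = (2:ℝ) from by norm_num] at h
  exact h

lemma coord_summable (v : KH) (j : Fin 3) :
    Summable fun α : ℤ × ℤ => ‖v α j‖ ^ (2:ℝ) := by
  refine (lp_hasSum v).summable.of_nonneg_of_le
    (fun α => Real.rpow_nonneg (norm_nonneg _) _) (fun α => ?_)
  rw [euc_norm_sq]
  exact Finset.single_le_sum (f := fun i => ‖v α i‖ ^ (2:ℝ))
    (fun i _ => Real.rpow_nonneg (norm_nonneg _) _) (Finset.mem_univ j)

lemma KH.ext {f g : KH} (hfg : ∀ (α : ℤ × ℤ) (i : Fin 3), f α i = g α i) : f = g :=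
  lp.ext (funext fun α => PiLp.ext fun i => hfg α i)

lemma KH.add_apply (u v : KH) (α : ℤ × ℤ) (i : Fin 3) : (u + v) α i = u α i + v α i := by
  rw [lp.coeFn_add]; rfl

lemma KH.smul_apply (c : ℂ) (v : KH) (α : ℤ × ℤ) (i : Fin 3) : (c • v) α i = c * v α i := by
  rw [lp.coeFn_smul]; rfl

lemma KH.neg_apply (v : KH) (α : ℤ × ℤ) (i : Fin 3) : (-v) α i = -(v α i) := by
  rw [lp.coeFn_neg]; rfl

section twist

variable (s : Fin 3 → ℤ × ℤ) (σ : Equiv.Perm (Fin 3)) (r : Fin 3 → ℤ × ℤ → ℝ)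

/-- raw twisted-translation map -/
def twistFun (v : KH) : ∀ _ : ℤ × ℤ, EuclideanSpace ℂ (Fin 3) :=
  fun α => WithLp.toLp 2 (fun i => phase (r i α) * v (α + s i) (σ i))

lemma twist_hasSum (v : KH) :
    HasSum (fun α => ‖twistFun s σ r v α‖ ^ (2:ℝ)) (‖v‖ ^ (2:ℝ)) := by
  have key : ∀ i : Fin 3, HasSum (fun α : ℤ × ℤ => ‖v (α + s i) (σ i)‖ ^ (2:ℝ))
      (∑' β : ℤ × ℤ, ‖v β (σ i)‖ ^ (2:ℝ)) := by
    intro i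
    have h1 := ((Equiv.addRight (s i)).hasSum_iff
      (f := fun β : ℤ × ℤ => ‖v β (σ i)‖ ^ (2:ℝ))
      (a := ∑' β : ℤ × ℤ, ‖v β (σ i)‖ ^ (2:ℝ))).2 (coord_summable v (σ i)).hasSum
    exact h1
  have h2 : HasSum (fun α : ℤ × ℤ => ∑ i : Fin 3, ‖v (α + s i) (σ i)‖ ^ (2:ℝ))
      (∑ i : Fin 3, ∑' β : ℤ × ℤ, ‖v β (σ i)‖ ^ (2:ℝ)) := hasSum_sum fun i _ => key i
  have hfun : (fun α => ‖twistFun s σ r v α‖ ^ (2:ℝ)) =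
      fun α : ℤ × ℤ => ∑ i : Fin 3, ‖v (α + s i) (σ i)‖ ^ (2:ℝ) := by
    funext α
    rw [euc_norm_sq]
    refine Finset.sum_congr rfl fun i _ => ?_
    rw [show twistFun s σ r v α i = phase (r i α) * v (α + s i) (σ i) from rfl,
      norm_mul, norm_phase, one_mul]
  have hval : (∑ i : Fin 3, ∑' β : ℤ × ℤ, ‖v β (σ i)‖ ^ (2:ℝ)) = ‖v‖ ^ (2:ℝ) := by
    rw [Equiv.sum_comp σ (fun j => ∑' β : ℤ × ℤ, ‖v β j‖ ^ (2:ℝ))]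
    have h3 : HasSum (fun β : ℤ × ℤ => ∑ j : Fin 3, ‖v β j‖ ^ (2:ℝ))
        (∑ j : Fin 3, ∑' β : ℤ × ℤ, ‖v β j‖ ^ (2:ℝ)) :=
      hasSum_sum fun j _ => (coord_summable v j).hasSum
    have h4 : HasSum (fun β : ℤ × ℤ => ∑ j : Fin 3, ‖v β j‖ ^ (2:ℝ)) (‖v‖ ^ (2:ℝ)) := by
      have h0 := lp_hasSum v
      rwa [show (fun β : ℤ × ℤ => ‖v β‖ ^ (2:ℝ)) = fun β => ∑ j : Fin 3, ‖v β j‖ ^ (2:ℝ)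
        from funext fun β => euc_norm_sq _] at h0
    exact h3.unique h4
  rw [hfun, ← hval]
  exact h2

lemma twist_memℓp (v : KH) : Memℓp (twistFun s σ r v) 2 := by
  apply memℓp_gen
  have := (twist_hasSum s σ r v).summable
  simp_rw [show ((2:ENNReal)).toReal = (2:ℝ) from by norm_num]
  exact this

/-- the twisted translation as an element of `KH` -/
def twistLp (v : KH) : KH := ⟨twistFun s σ r v, twist_memℓp s σ r v⟩

lemma twistLp_apply (v : KH) (α : ℤ × ℤ) (i : Fin 3) :
    twistLp s σ r v α i = phase (r i α) * v (α + s i) (σ i) := rfl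

end twist

/-- the twisted translation as a linear isometric equivalence -/
def twist (s : Fin 3 → ℤ × ℤ) (σ : Equiv.Perm (Fin 3)) (r : Fin 3 → ℤ × ℤ → ℝ) :
    KH ≃ₗᵢ[ℂ] KH where
  toLinearEquiv :=
  { toFun := twistLp s σ r
    invFun := twistLp (fun j => -(s (σ.symm j))) σ.symm
        (fun j β => -(r (σ.symm j) (β + -(s (σ.symm j)))))
    map_add' := by
      intro u v
      refine KH.ext fun α i => ?_
      rw [KH.add_apply, twistLp_apply, twistLp_apply, twistLp_apply, KH.add_apply]
      ring
    map_smul' := by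
      intro c v
      refine KH.ext fun α i => ?_
      rw [twistLp_apply, KH.smul_apply, RingHom.id_apply, KH.smul_apply, twistLp_apply]
      ring
    left_inv := by
      intro v
      refine KH.ext fun α j => ?_
      rw [twistLp_apply, twistLp_apply]
      rw [Equiv.apply_symm_apply, neg_add_cancel_right, ← mul_assoc, phase_neg_mul, one_mul]
    right_inv := by
      intro w
      refine KH.ext fun α i => ?_
      rw [twistLp_apply, twistLp_apply]
      simp only [Equiv.symm_apply_apply, add_neg_cancel_right]
      rw [← mul_assoc, mul_comm (phase (r i α)), phase_neg_mul, one_mul]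
  }
  norm_map' := by
    intro v
    have h1 := lp_hasSum (twistLp s σ r v)
    have h3 : ‖twistLp s σ r v‖ ^ (2:ℝ) = ‖v‖ ^ (2:ℝ) := h1.unique (twist_hasSum s σ r v)
    have h4 := congrArg Real.sqrt h3
    rwa [rpow_two_eq, rpow_two_eq, Real.sqrt_sq (norm_nonneg _),
      Real.sqrt_sq (norm_nonneg _)] at h4

lemma twist_apply (s : Fin 3 → ℤ × ℤ) (σ : Equiv.Perm (Fin 3)) (r : Fin 3 → ℤ × ℤ → ℝ)
    (v : KH) (α : ℤ × ℤ) (i : Fin 3) :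
    (twist s σ r v) α i = phase (r i α) * v (α + s i) (σ i) := rfl

lemma twist_symm_apply (s : Fin 3 → ℤ × ℤ) (σ : Equiv.Perm (Fin 3)) (r : Fin 3 → ℤ × ℤ → ℝ)
    (w : KH) (β : ℤ × ℤ) (j : Fin 3) :
    ((twist s σ r).symm w) β j =
      phase (-(r (σ.symm j) (β + -(s (σ.symm j))))) * w (β + -(s (σ.symm j))) (σ.symm j) := rfl

/-- the 3-cycle `0 ↦ 1 ↦ 2 ↦ 0` -/
def c3 : Equiv.Perm (Fin 3) := ⟨fun i => i + 1, fun i => i - 1, by decide, by decide⟩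

def s1 : Fin 3 → ℤ × ℤ := ![(1,0), (-1,1), (-1,0)]
def s2 : Fin 3 → ℤ × ℤ := ![(1,-1), (0,1), (0,-1)]

def r1 (γ ω : ℝ) : Fin 3 → ℤ × ℤ → ℝ :=
  ![fun _ => ω + γ/8,
    fun α => (ω + γ/8) + (-(γ/2) - γ * ((α.1 : ℝ) - 1)),
    fun _ => ω + γ/8]

def r2 (γ ω : ℝ) : Fin 3 → ℤ × ℤ → ℝ :=
  ![fun α => (ω + γ/8) + (-(γ/2) + γ * ((α.1 : ℝ) + 1)),
    fun α => (ω + γ/8) - γ * (α.1 : ℝ),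
    fun α => (ω + γ/8) + γ * (α.1 : ℝ)]

def U1 (γ ω : ℝ) : KH ≃ₗᵢ[ℂ] KH := twist s1 c3 (r1 γ ω)
def U2 (γ ω : ℝ) : KH ≃ₗᵢ[ℂ] KH := twist s2 c3 (r2 γ ω)

end KagomeAux

open KagomeAux ContinuousLinearMap in
lemma kagome_eq {γ ω : ℝ} {Q : KH →L[ℂ] KH} (h : IsKagome γ ω Q) :
    Q = (((U1 γ ω : KH →L[ℂ] KH) + adjoint (U1 γ ω : KH →L[ℂ] KH))
      + ((U2 γ ω : KH →L[ℂ] KH) + adjoint (U2 γ ω : KH →L[ℂ] KH))) := by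
  rw [LinearIsometryEquiv.adjoint_eq_symm, LinearIsometryEquiv.adjoint_eq_symm]
  refine ContinuousLinearMap.ext fun v => KH.ext fun α i => ?_
  obtain ⟨a, b⟩ := α
  rw [ContinuousLinearMap.add_apply, ContinuousLinearMap.add_apply,
    ContinuousLinearMap.add_apply, KH.add_apply, KH.add_apply, KH.add_apply]
  fin_cases i <;>
    simp only [Fin.zero_eta, Fin.mk_one, Fin.reduceFinMk, Fin.isValue]
  · rw [(h v a b).1]
    simp only [LinearIsometryEquiv.coe_coe'', U1, U2, twist_apply, twist_symm_apply,
      s1, s2, r1, r2, c3, Equiv.coe_fn_mk, Equiv.coe_fn_symm_mk,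
      Matrix.cons_val_zero, Matrix.cons_val_one, Matrix.head_cons, Fin.isValue,
      Matrix.cons_val_two, Matrix.tail_cons, Fin.reduceAdd, Fin.reduceSub,
      Prod.mk_add_mk, Prod.neg_mk, neg_neg, neg_zero, add_zero,
      ← sub_eq_add_neg, phase]
    push_cast
    ring_nf
    simp only [← Complex.exp_add]
    ring_nf
  · rw [(h v a b).2.1]
    simp only [LinearIsometryEquiv.coe_coe'', U1, U2, twist_apply, twist_symm_apply,
      s1, s2, r1, r2, c3, Equiv.coe_fn_mk, Equiv.coe_fn_symm_mk,
      Matrix.cons_val_zero, Matrix.cons_val_one, Matrix.head_cons, Fin.isValue,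
      Matrix.cons_val_two, Matrix.tail_cons, Fin.reduceAdd, Fin.reduceSub,
      Prod.mk_add_mk, Prod.neg_mk, neg_neg, neg_zero, add_zero,
      ← sub_eq_add_neg, phase]
    push_cast
    ring_nf
    simp only [← Complex.exp_add]
    ring_nf
  · rw [(h v a b).2.2]
    simp only [LinearIsometryEquiv.coe_coe'', U1, U2, twist_apply, twist_symm_apply,
      s1, s2, r1, r2, c3, Equiv.coe_fn_mk, Equiv.coe_fn_symm_mk,
      Matrix.cons_val_zero, Matrix.cons_val_one, Matrix.head_cons, Fin.isValue,
      Matrix.cons_val_two, Matrix.tail_cons, Fin.reduceAdd, Fin.reduceSub,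
      Prod.mk_add_mk, Prod.neg_mk, neg_neg, neg_zero, add_zero,
      ← sub_eq_add_neg, phase]
    push_cast
    ring_nf
    simp only [← Complex.exp_add]
    ring_nf

theorem stmt11 (γ ω : ℝ) (Q Q₂ Q₃ : KH →L[ℂ] KH)
    (h : IsKagome γ ω Q)
    (h₂ : IsKagome (γ + 16 * Real.pi) ω Q₂)
    (h₃ : IsKagome (γ + 8 * Real.pi) ω Q₃) :
    spectrum ℂ Q ⊆ Complex.ofReal '' Set.Icc (-4 : ℝ) 4
    ∧ spectrum ℂ Q₂ = spectrum ℂ Q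
    ∧ (∀ e : ℂ, e ∈ spectrum ℂ Q₃ ↔ -e ∈ spectrum ℂ Q) := by
  have hQ := kagome_eq h
  -- nontriviality of `KH`
  haveI : Nontrivial KH := by
    refine ⟨0, lp.single 2 ((0,0) : ℤ × ℤ) (EuclideanSpace.single 0 (1:ℂ)), fun hcon => ?_⟩
    have h1 := congrArg (fun f : KH => f (0,0) 0) hcon
    simp only [lp.single_apply_self] at h1
    rw [show ((0 : KH) ((0,0) : ℤ × ℤ) 0) = 0 from rfl] at h1
    simp [EuclideanSpace.single_apply] at h1
  -- self-adjointness
  have hsa : _root_.IsSelfAdjoint Q := by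
    rw [_root_.isSelfAdjoint_iff, hQ]
    simp only [star_add, ContinuousLinearMap.star_eq_adjoint,
      ContinuousLinearMap.adjoint_adjoint]
    abel
  -- norm bound
  have hU : ∀ e : KH ≃ₗᵢ[ℂ] KH, ‖(e : KH →L[ℂ] KH)‖ ≤ 1 := fun e => by
    refine ContinuousLinearMap.opNorm_le_bound _ zero_le_one fun x => ?_
    rw [one_mul, LinearIsometryEquiv.coe_coe'', e.norm_map]
  have hQ4 : ‖Q‖ ≤ 4 := by
    rw [hQ, LinearIsometryEquiv.adjoint_eq_symm, LinearIsometryEquiv.adjoint_eq_symm]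
    have h1 := hU (KagomeAux.U1 γ ω)
    have h2 := hU (KagomeAux.U1 γ ω).symm
    have h3 := hU (KagomeAux.U2 γ ω)
    have h4 := hU (KagomeAux.U2 γ ω).symm
    calc ‖_ + _‖ ≤ ‖((KagomeAux.U1 γ ω : KH →L[ℂ] KH) + ((KagomeAux.U1 γ ω).symm : KH →L[ℂ] KH))‖
        + ‖((KagomeAux.U2 γ ω : KH →L[ℂ] KH) + ((KagomeAux.U2 γ ω).symm : KH →L[ℂ] KH))‖ :=
          norm_add_le _ _
      _ ≤ 4 := by
          have := norm_add_le ((KagomeAux.U1 γ ω : KH →L[ℂ] KH)) (((KagomeAux.U1 γ ω).symm : KH →L[ℂ] KH))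
          have := norm_add_le ((KagomeAux.U2 γ ω : KH →L[ℂ] KH)) (((KagomeAux.U2 γ ω).symm : KH →L[ℂ] KH))
          linarith
  refine ⟨?_, ?_, ?_⟩
  · intro z hz
    have hre : z = (z.re : ℂ) := hsa.mem_spectrum_eq_re hz
    have hb : ‖z‖ ≤ ‖Q‖ := spectrum.norm_le_norm_of_mem hz
    have habs : |z.re| ≤ 4 := by
      have : ‖z‖ = |z.re| := by rw [hre]; exact Complex.norm_real _
      linarith
    exact ⟨z.re, Set.mem_Icc.2 (abs_le.1 habs), hre.symm⟩
  · -- translation invariance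
    have e1 : Complex.exp (Complex.I * ((ω : ℂ) + ((γ + 16 * Real.pi : ℝ) : ℂ)/8)) =
        Complex.exp (Complex.I * ((ω : ℂ) + (γ : ℂ)/8)) := by
      rw [Complex.exp_eq_exp_iff_exists_int]; exact ⟨1, by push_cast; ring⟩
    have e1' : Complex.exp (-(Complex.I * ((ω : ℂ) + ((γ + 16 * Real.pi : ℝ) : ℂ)/8))) =
        Complex.exp (-(Complex.I * ((ω : ℂ) + (γ : ℂ)/8))) := by
      rw [Complex.exp_eq_exp_iff_exists_int]; exact ⟨-1, by push_cast; ring⟩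
    have e2 : ∀ a : ℤ, Complex.exp (Complex.I * (-(((γ + 16 * Real.pi : ℝ) : ℂ)/2)
          + ((γ + 16 * Real.pi : ℝ) : ℂ) * ((a : ℂ)+1))) =
        Complex.exp (Complex.I * (-((γ : ℂ)/2) + (γ : ℂ) * ((a : ℂ)+1))) := fun a => by
      rw [Complex.exp_eq_exp_iff_exists_int]; exact ⟨8*a+4, by push_cast; ring⟩
    have e3 : ∀ a : ℤ, Complex.exp (-(Complex.I * ((γ + 16 * Real.pi : ℝ) : ℂ) * (a : ℂ))) =
        Complex.exp (-(Complex.I * (γ : ℂ) * (a : ℂ))) := fun a => by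
      rw [Complex.exp_eq_exp_iff_exists_int]; exact ⟨-8*a, by push_cast; ring⟩
    have e4 : ∀ a : ℤ, Complex.exp (Complex.I * (-(((γ + 16 * Real.pi : ℝ) : ℂ)/2)
          - ((γ + 16 * Real.pi : ℝ) : ℂ) * ((a : ℂ)-1))) =
        Complex.exp (Complex.I * (-((γ : ℂ)/2) - (γ : ℂ) * ((a : ℂ)-1))) := fun a => by
      rw [Complex.exp_eq_exp_iff_exists_int]; exact ⟨4-8*a, by push_cast; ring⟩
    have e5 : ∀ a : ℤ, Complex.exp (Complex.I * ((γ + 16 * Real.pi : ℝ) : ℂ) * (a : ℂ)) =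
        Complex.exp (Complex.I * (γ : ℂ) * (a : ℂ)) := fun a => by
      rw [Complex.exp_eq_exp_iff_exists_int]; exact ⟨8*a, by push_cast; ring⟩
    have hQ2 : Q₂ = Q := by
      refine ContinuousLinearMap.ext fun v => KagomeAux.KH.ext fun α i => ?_
      obtain ⟨a, b⟩ := α
      fin_cases i <;> simp only [Fin.zero_eta, Fin.mk_one, Fin.reduceFinMk, Fin.isValue]
      · rw [(h₂ v a b).1, (h v a b).1, e1, e1', e2 a, e3 a]
      · rw [(h₂ v a b).2.1, (h v a b).2.1, e1, e1', e4 a, e3 a]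
      · rw [(h₂ v a b).2.2, (h v a b).2.2, e1, e1', e2 a, e5 a]
    rw [hQ2]
  · -- translation anti-invariance
    have f1 : Complex.exp (Complex.I * ((ω : ℂ) + ((γ + 8 * Real.pi : ℝ) : ℂ)/8)) =
        -Complex.exp (Complex.I * ((ω : ℂ) + (γ : ℂ)/8)) := by
      rw [show -Complex.exp (Complex.I * ((ω : ℂ) + (γ : ℂ)/8)) =
          Complex.exp (Complex.I * ((ω : ℂ) + (γ : ℂ)/8) + (Real.pi : ℂ) * Complex.I) from by
        rw [Complex.exp_add, Complex.exp_pi_mul_I]; ring]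
      rw [Complex.exp_eq_exp_iff_exists_int]; exact ⟨0, by push_cast; ring⟩
    have f2 : Complex.exp (-(Complex.I * ((ω : ℂ) + ((γ + 8 * Real.pi : ℝ) : ℂ)/8))) =
        -Complex.exp (-(Complex.I * ((ω : ℂ) + (γ : ℂ)/8))) := by
      rw [show -Complex.exp (-(Complex.I * ((ω : ℂ) + (γ : ℂ)/8))) =
          Complex.exp (-(Complex.I * ((ω : ℂ) + (γ : ℂ)/8)) + (Real.pi : ℂ) * Complex.I) from by
        rw [Complex.exp_add, Complex.exp_pi_mul_I]; ring]
      rw [Complex.exp_eq_exp_iff_exists_int]; exact ⟨-1, by push_cast; ring⟩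
    have f3 : ∀ a : ℤ, Complex.exp (Complex.I * (-(((γ + 8 * Real.pi : ℝ) : ℂ)/2)
          + ((γ + 8 * Real.pi : ℝ) : ℂ) * ((a : ℂ)+1))) =
        Complex.exp (Complex.I * (-((γ : ℂ)/2) + (γ : ℂ) * ((a : ℂ)+1))) := fun a => by
      rw [Complex.exp_eq_exp_iff_exists_int]; exact ⟨4*a+2, by push_cast; ring⟩
    have f4 : ∀ a : ℤ, Complex.exp (-(Complex.I * ((γ + 8 * Real.pi : ℝ) : ℂ) * (a : ℂ))) =
        Complex.exp (-(Complex.I * (γ : ℂ) * (a : ℂ))) := fun a => by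
      rw [Complex.exp_eq_exp_iff_exists_int]; exact ⟨-4*a, by push_cast; ring⟩
    have f5 : ∀ a : ℤ, Complex.exp (Complex.I * (-(((γ + 8 * Real.pi : ℝ) : ℂ)/2)
          - ((γ + 8 * Real.pi : ℝ) : ℂ) * ((a : ℂ)-1))) =
        Complex.exp (Complex.I * (-((γ : ℂ)/2) - (γ : ℂ) * ((a : ℂ)-1))) := fun a => by
      rw [Complex.exp_eq_exp_iff_exists_int]; exact ⟨2-4*a, by push_cast; ring⟩
    have f6 : ∀ a : ℤ, Complex.exp (Complex.I * ((γ + 8 * Real.pi : ℝ) : ℂ) * (a : ℂ)) =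
        Complex.exp (Complex.I * (γ : ℂ) * (a : ℂ)) := fun a => by
      rw [Complex.exp_eq_exp_iff_exists_int]; exact ⟨4*a, by push_cast; ring⟩
    have hQ3 : Q₃ = -Q := by
      refine ContinuousLinearMap.ext fun v => KagomeAux.KH.ext fun α i => ?_
      obtain ⟨a, b⟩ := α
      rw [ContinuousLinearMap.neg_apply, KagomeAux.KH.neg_apply]
      fin_cases i <;> simp only [Fin.zero_eta, Fin.mk_one, Fin.reduceFinMk, Fin.isValue]
      · rw [(h₃ v a b).1, (h v a b).1, f1, f2, f3 a, f4 a]; ring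
      · rw [(h₃ v a b).2.1, (h v a b).2.1, f1, f2, f5 a, f4 a]; ring
      · rw [(h₃ v a b).2.2, (h v a b).2.2, f1, f2, f3 a, f6 a]; ring
    intro e
    rw [hQ3, ← spectrum.neg_eq, Set.mem_neg]

end
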